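/- For all complex-valued Schwartz functions f and g on ℝ^{2N}, one has pointwise on ℝ^{2N}: f × g = (Ff) ♮ g = f ♮ (F̃g), and f ♮ g = (Ff) × g = f × (F̃g). -/

import Mathlib

open MeasureTheory SchwartzMap Complex

noncomputable section

abbrev PS (N : ℕ) := EuclideanSpace ℝ (Fin N ⊕ Fin N)

def symp {N : ℕ} (u v : PS N) : ℝ :=
  ∑ i : Fin N, (u (Sum.inl i) * v (Sum.inr i) - u (Sum.inr i) * v (Sum.inl i))

def mes (N : ℕ) : Measure (PS N) :=
  (ENNReal.ofReal ((2 * Real.pi) ^ N))⁻¹ • (volume : Measure (PS N))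

def twProd {N : ℕ} (f g : PS N → ℂ) : PS N → ℂ := fun u =>
  ∫ s, ∫ t, f (u + s) * g (u + t) * Complex.exp (Complex.I * (symp s t : ℂ)) ∂(mes N) ∂(mes N)

def twConv {N : ℕ} (f g : PS N → ℂ) : PS N → ℂ := fun u =>
  ∫ t, f (u - t) * g t * Complex.exp (-Complex.I * (symp u t : ℂ)) ∂(mes N)

/-- The symplectic Fourier transform `F`. -/
def sympF {N : ℕ} (f : PS N → ℂ) : PS N → ℂ := fun u =>
  ∫ t, f t * Complex.exp (-Complex.I * (symp t u : ℂ)) ∂(mes N)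

/-- The symplectic Fourier transform `F̃`. -/
def sympFt {N : ℕ} (f : PS N → ℂ) : PS N → ℂ := fun u =>
  ∫ t, f t * Complex.exp (Complex.I * (symp t u : ℂ)) ∂(mes N)

open FourierTransform RealInnerProductSpace

namespace TwAux

variable {N : ℕ}

/- ### Bilinearity of `symp` -/

lemma symp_add_right (a b c : PS N) : symp a (b + c) = symp a b + symp a c := by
  simp only [symp, PiLp.add_apply]
  rw [← Finset.sum_add_distrib]
  exact Finset.sum_congr rfl (fun i _ => by ring)

lemma symp_sub_right (a b c : PS N) : symp a (b - c) = symp a b - symp a c := by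
  simp only [symp, PiLp.sub_apply]
  rw [← Finset.sum_sub_distrib]
  exact Finset.sum_congr rfl (fun i _ => by ring)

lemma symp_sub_left (a b c : PS N) : symp (a - b) c = symp a c - symp b c := by
  simp only [symp, PiLp.sub_apply]
  rw [← Finset.sum_sub_distrib]
  exact Finset.sum_congr rfl (fun i _ => by ring)

lemma symp_self (a : PS N) : symp a a = 0 := by
  simp [symp, mul_comm]

lemma symp_anti (a b : PS N) : symp a b = -symp b a := by
  simp only [symp, ← Finset.sum_neg_distrib]
  exact Finset.sum_congr rfl (fun i _ => by ring)

/- ### The complex structure `J` -/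

def Jmap (N : ℕ) : PS N ≃ₗᵢ[ℝ] PS N where
  toFun u := WithLp.toLp 2 (fun j => Sum.elim (fun i => u (Sum.inr i)) (fun i => -u (Sum.inl i)) j)
  invFun u := WithLp.toLp 2 (fun j => Sum.elim (fun i => -u (Sum.inr i)) (fun i => u (Sum.inl i)) j)
  map_add' a b := by ext j; cases j <;> simp [PiLp.add_apply, add_comm]
  map_smul' c a := by ext j; cases j <;> simp [PiLp.smul_apply, smul_eq_mul]
  left_inv a := by ext j; cases j <;> simp
  right_inv a := by ext j; cases j <;> simp
  norm_map' a := by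
    simp only [EuclideanSpace.norm_eq]
    congr 1
    rw [Fintype.sum_sum_type, Fintype.sum_sum_type]
    simp [add_comm]

@[simp] lemma Jmap_apply_inl (u : PS N) (i : Fin N) : Jmap N u (Sum.inl i) = u (Sum.inr i) := rfl
@[simp] lemma Jmap_apply_inr (u : PS N) (i : Fin N) : Jmap N u (Sum.inr i) = -u (Sum.inl i) := rfl

lemma Jmap_Jmap (t : PS N) : Jmap N (Jmap N t) = -t := by
  ext j; cases j <;> simp [PiLp.neg_apply]

lemma symp_eq_inner (a b : PS N) : symp a b = ⟪a, Jmap N b⟫ := by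
  rw [PiLp.inner_apply]
  simp only [RCLike.inner_apply, conj_trivial]
  rw [Fintype.sum_sum_type]
  simp only [Jmap_apply_inl, Jmap_apply_inr, symp]
  rw [Finset.sum_sub_distrib]
  simp [mul_neg, sub_eq_add_neg, Finset.sum_neg_distrib, mul_comm]

lemma symp_symm_inner (x t : PS N) : symp ((Jmap N).symm x) t = -⟪x, t⟫ := by
  rw [symp_eq_inner, ← (Jmap N).inner_map_map, LinearIsometryEquiv.apply_symm_apply, Jmap_Jmap,
    inner_neg_right]

lemma continuous_symp : Continuous (fun p : PS N × PS N => symp p.1 p.2) := by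
  simp only [symp_eq_inner]
  exact continuous_fst.inner ((Jmap N).continuous.comp continuous_snd)

lemma finrank_PS : Module.finrank ℝ (PS N) = N + N := by
  simp [finrank_euclideanSpace]

lemma two_pi_pos : (0:ℝ) < 2 * Real.pi := by positivity

/- ### Properties of the measure `mes` -/

instance : SFinite (mes N) := by unfold mes; infer_instance
instance : (mes N).IsAddLeftInvariant := by unfold mes; infer_instance
instance : (mes N).IsAddRightInvariant := by unfold mes; infer_instance
instance : (mes N).IsNegInvariant := by
  constructor
  unfold mes
  rw [Measure.neg_def, Measure.map_smul, Measure.map_neg_eq_self]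

lemma mes_integral (h : PS N → ℂ) :
    ∫ x, h x ∂(mes N) = (((2 * Real.pi) ^ N)⁻¹ : ℝ) • ∫ x, h x := by
  rw [mes, integral_smul_measure, ENNReal.toReal_inv, ENNReal.toReal_ofReal (by positivity)]

lemma schwartz_integrable (f : SchwartzMap (PS N) ℂ) : Integrable (⇑f) (mes N) := by
  refine (f.integrable).smul_measure ?_
  simp only [ne_eq, ENNReal.inv_eq_top, ENNReal.ofReal_eq_zero, not_le]
  positivity

/- ### `sympF` and `sympFt` via the classical Fourier transform -/

lemma sympF_eq (f : PS N → ℂ) (u : PS N) :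
    sympF f u = (((2 * Real.pi) ^ N)⁻¹ : ℝ) • 𝓕 f ((2 * Real.pi)⁻¹ • Jmap N u) := by
  rw [sympF, mes_integral]
  congr 1
  rw [Real.fourier_eq']
  congr 1
  funext t
  rw [smul_eq_mul, real_inner_smul_right, symp_eq_inner, mul_comm]
  congr 1
  congr 1
  have h2 : ((2:ℂ) * Real.pi) ≠ 0 := by exact_mod_cast two_pi_pos.ne'
  field_simp
  push_cast
  ring

lemma sympFt_eq (f : PS N → ℂ) (u : PS N) :
    sympFt f u = (((2 * Real.pi) ^ N)⁻¹ : ℝ) • 𝓕⁻ f ((2 * Real.pi)⁻¹ • Jmap N u) := by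
  rw [sympFt, mes_integral]
  congr 1
  rw [Real.fourierInv_eq']
  congr 1
  funext t
  rw [smul_eq_mul, real_inner_smul_right, symp_eq_inner, mul_comm]
  congr 1
  congr 1
  have h2 : ((2:ℂ) * Real.pi) ≠ 0 := by exact_mod_cast two_pi_pos.ne'
  field_simp

lemma integrable_F (f : SchwartzMap (PS N) ℂ) : Integrable (𝓕 ⇑f) volume := by
  rw [← SchwartzMap.fourier_coe]
  exact (𝓕 f).integrable

lemma integrable_sympF (f : SchwartzMap (PS N) ℂ) : Integrable (sympF (⇑f)) (mes N) := by
  have h0 : sympF (⇑f) = fun u =>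
      (((2 * Real.pi) ^ N)⁻¹ : ℝ) • 𝓕 (⇑f) ((2 * Real.pi)⁻¹ • Jmap N u) :=
    funext (sympF_eq (⇑f))
  rw [h0]
  have h1 : Integrable (fun x : PS N => 𝓕 (⇑f) ((2 * Real.pi)⁻¹ • x)) volume :=
    (integrable_F f).comp_smul (inv_ne_zero two_pi_pos.ne')
  have h2 : Integrable ((fun x : PS N => 𝓕 (⇑f) ((2 * Real.pi)⁻¹ • x)) ∘ (Jmap N)) volume :=
    ((Jmap N).measurePreserving.integrable_comp_emb
      (Jmap N).toHomeomorph.measurableEmbedding).2 h1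
  have h3 : Integrable (fun u : PS N => 𝓕 (⇑f) ((2 * Real.pi)⁻¹ • Jmap N u)) volume := h2
  refine (h3.smul ((((2 * Real.pi) ^ N)⁻¹ : ℝ))).smul_measure ?_
  simp only [ne_eq, ENNReal.inv_eq_top, ENNReal.ofReal_eq_zero, not_le]
  positivity

/- ### Fourier inversion -/

lemma sympFt_sympF (f : SchwartzMap (PS N) ℂ) (t : PS N) :
    sympFt (sympF (⇑f)) t = f (-t) := by
  have h2 : (0:ℝ) < 2 * Real.pi := two_pi_pos
  set cN : ℝ := ((2 * Real.pi) ^ N)⁻¹ with hcN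
  have key : (∫ w, 𝓕 (⇑f) ((2 * Real.pi)⁻¹ • Jmap N w)
      * Complex.exp (Complex.I * (symp w t : ℂ)))
      = ((2 * Real.pi) ^ (N + N) : ℝ) • f (-t) := by
    set K : PS N → ℂ := fun v =>
      Complex.exp ((↑(-2 * Real.pi * ⟪v, t⟫) * Complex.I)) • 𝓕 (⇑f) v with hK
    calc (∫ w, 𝓕 (⇑f) ((2 * Real.pi)⁻¹ • Jmap N w) * Complex.exp (Complex.I * (symp w t : ℂ)))
        = ∫ x, 𝓕 (⇑f) ((2 * Real.pi)⁻¹ • Jmap N ((Jmap N).symm x))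
            * Complex.exp (Complex.I * (symp ((Jmap N).symm x) t : ℂ)) :=
          (MeasurePreserving.integral_comp ((Jmap N).symm).measurePreserving
            ((Jmap N).symm.toHomeomorph.measurableEmbedding) _).symm
      _ = ∫ x, K ((2 * Real.pi)⁻¹ • x) := by
          congr 1; funext x
          simp only [hK]
          rw [LinearIsometryEquiv.apply_symm_apply, symp_symm_inner]
          rw [smul_eq_mul, real_inner_smul_left, mul_comm]
          congr 2
          have h2' : ((2:ℂ) * Real.pi) ≠ 0 := by exact_mod_cast h2.ne'
          push_cast
          field_simp
      _ = ((2 * Real.pi) ^ (N + N) : ℝ) • ∫ v, K v := by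
          rw [Measure.integral_comp_inv_smul_of_nonneg volume K h2.le, finrank_PS]
      _ = ((2 * Real.pi) ^ (N + N) : ℝ) • 𝓕 (𝓕 (⇑f)) t := by
          rw [Real.fourier_eq']
      _ = ((2 * Real.pi) ^ (N + N) : ℝ) • f (-t) := by
          congr 1
          have hinv := Continuous.fourierInv_fourier_eq f.continuous f.integrable (integrable_F f)
          calc 𝓕 (𝓕 (⇑f)) t = 𝓕⁻ (𝓕 ⇑f) (-t) := by
                rw [Real.fourierInv_eq_fourier_neg, neg_neg]
            _ = f (-t) := by rw [hinv]
  rw [sympFt, mes_integral]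
  have h4 : (∫ w, sympF (⇑f) w * Complex.exp (Complex.I * (symp w t : ℂ)))
      = cN • ∫ w, 𝓕 (⇑f) ((2 * Real.pi)⁻¹ • Jmap N w)
          * Complex.exp (Complex.I * (symp w t : ℂ)) := by
    rw [← integral_smul]
    congr 1; funext w
    rw [sympF_eq, smul_mul_assoc]
  rw [h4, key, smul_smul, smul_smul, hcN]
  have hone : ((2 * Real.pi) ^ N)⁻¹ * ((2 * Real.pi) ^ N)⁻¹ * (2 * Real.pi) ^ (N + N) = 1 := by
    rw [pow_add]
    field_simp
  rw [hone, one_smul]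

lemma sympF_sympFt (g : SchwartzMap (PS N) ℂ) (s : PS N) :
    sympF (sympFt (⇑g)) s = g (-s) := by
  have h2 : (0:ℝ) < 2 * Real.pi := two_pi_pos
  set cN : ℝ := ((2 * Real.pi) ^ N)⁻¹ with hcN
  have key : (∫ w, 𝓕⁻ (⇑g) ((2 * Real.pi)⁻¹ • Jmap N w)
      * Complex.exp (-Complex.I * (symp w s : ℂ)))
      = ((2 * Real.pi) ^ (N + N) : ℝ) • g (-s) := by
    set K : PS N → ℂ := fun v =>
      Complex.exp ((↑(2 * Real.pi * ⟪v, s⟫) * Complex.I)) • 𝓕⁻ (⇑g) v with hK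
    calc (∫ w, 𝓕⁻ (⇑g) ((2 * Real.pi)⁻¹ • Jmap N w) * Complex.exp (-Complex.I * (symp w s : ℂ)))
        = ∫ x, 𝓕⁻ (⇑g) ((2 * Real.pi)⁻¹ • Jmap N ((Jmap N).symm x))
            * Complex.exp (-Complex.I * (symp ((Jmap N).symm x) s : ℂ)) :=
          (MeasurePreserving.integral_comp ((Jmap N).symm).measurePreserving
            ((Jmap N).symm.toHomeomorph.measurableEmbedding) _).symm
      _ = ∫ x, K ((2 * Real.pi)⁻¹ • x) := by
          congr 1; funext x
          simp only [hK]
          rw [LinearIsometryEquiv.apply_symm_apply, symp_symm_inner]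
          rw [smul_eq_mul, real_inner_smul_left, mul_comm]
          congr 2
          have h2' : ((2:ℂ) * Real.pi) ≠ 0 := by exact_mod_cast h2.ne'
          push_cast
          field_simp
      _ = ((2 * Real.pi) ^ (N + N) : ℝ) • ∫ v, K v := by
          rw [Measure.integral_comp_inv_smul_of_nonneg volume K h2.le, finrank_PS]
      _ = ((2 * Real.pi) ^ (N + N) : ℝ) • 𝓕⁻ (𝓕⁻ (⇑g)) s := by
          rw [Real.fourierInv_eq']
      _ = ((2 * Real.pi) ^ (N + N) : ℝ) • g (-s) := by
          congr 1
          have hinv := Continuous.fourier_fourierInv_eq g.continuous g.integrable (integrable_F g)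
          calc 𝓕⁻ (𝓕⁻ (⇑g)) s = 𝓕 (𝓕⁻ ⇑g) (-s) := by
                rw [Real.fourierInv_eq_fourier_neg]
            _ = g (-s) := by rw [hinv]
  rw [sympF, mes_integral]
  have h4 : (∫ w, sympFt (⇑g) w * Complex.exp (-Complex.I * (symp w s : ℂ)))
      = cN • ∫ w, 𝓕⁻ (⇑g) ((2 * Real.pi)⁻¹ • Jmap N w)
          * Complex.exp (-Complex.I * (symp w s : ℂ)) := by
    rw [← integral_smul]
    congr 1; funext w
    rw [sympFt_eq, smul_mul_assoc]
  rw [h4, key, smul_smul, smul_smul, hcN]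
  have hone : ((2 * Real.pi) ^ N)⁻¹ * ((2 * Real.pi) ^ N)⁻¹ * (2 * Real.pi) ^ (N + N) = 1 := by
    rw [pow_add]
    field_simp
  rw [hone, one_smul]

end TwAux
namespace TwAux

variable {N : ℕ}

lemma integ_kernel {F G : PS N → ℂ} (hF : Integrable F (mes N)) (hG : Integrable G (mes N))
    {φ : PS N × PS N → ℝ} (hφ : Continuous φ) :
    Integrable (fun p : PS N × PS N => F p.1 * G p.2 * Complex.exp (Complex.I * (φ p : ℂ)))
      ((mes N).prod (mes N)) := by
  have h1 : Integrable (fun p : PS N × PS N => F p.1 * G p.2) ((mes N).prod (mes N)) :=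
    hF.mul_prod hG
  have h2 : AEStronglyMeasurable (fun p : PS N × PS N => Complex.exp (Complex.I * (φ p : ℂ)))
      ((mes N).prod (mes N)) :=
    (Complex.continuous_exp.comp (continuous_const.mul
      (Complex.continuous_ofReal.comp hφ))).aestronglyMeasurable
  have h3 := h1.bdd_mul h2 (c := 1) (Filter.Eventually.of_forall fun p => by simp [Complex.norm_exp])
  exact h3.congr (Filter.Eventually.of_forall fun p => by ring)

lemma hphi (u : PS N) :
    Continuous (fun p : PS N × PS N => symp p.1 p.2 - symp u p.2 - symp p.1 u) := by
  refine (continuous_symp.sub ?_).sub ?_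
  · exact continuous_symp.comp (continuous_const.prodMk continuous_snd)
  · exact continuous_symp.comp (continuous_fst.prodMk continuous_const)

lemma prod_canon (F G : PS N → ℂ) (u : PS N) :
    twProd F G u = ∫ w, ∫ x, F w * G x *
      Complex.exp (Complex.I * ((symp w x - symp u x - symp w u : ℝ) : ℂ)) ∂(mes N) ∂(mes N) := by
  rw [twProd]
  have step1 : ∀ s : PS N,
      (∫ t, F (u + s) * G (u + t) * Complex.exp (Complex.I * (symp s t : ℂ)) ∂(mes N))
      = ∫ x, F (u + s) * G x
          * Complex.exp (Complex.I * ((symp s x - symp s u : ℝ) : ℂ)) ∂(mes N) := by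
    intro s
    rw [← integral_add_left_eq_self (μ := mes N)
      (fun x => F (u + s) * G x * Complex.exp (Complex.I * ((symp s x - symp s u : ℝ) : ℂ))) u]
    congr 1; funext t
    show F (u + s) * G (u + t) * Complex.exp (Complex.I * (symp s t : ℂ))
      = F (u + s) * G (u + t)
          * Complex.exp (Complex.I * ((symp s (u + t) - symp s u : ℝ) : ℂ))
    congr 2
    rw [symp_add_right]
    push_cast
    ring
  calc (∫ s, ∫ t, F (u + s) * G (u + t)
        * Complex.exp (Complex.I * (symp s t : ℂ)) ∂(mes N) ∂(mes N))
      = ∫ s, (fun w => ∫ x, F w * G x * Complex.exp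
          (Complex.I * ((symp (w - u) x - symp (w - u) u : ℝ) : ℂ)) ∂(mes N)) (u + s) ∂(mes N) := by
        congr 1; funext s
        rw [step1 s]
        simp only [add_sub_cancel_left]
    _ = ∫ w, ∫ x, F w * G x * Complex.exp
          (Complex.I * ((symp (w - u) x - symp (w - u) u : ℝ) : ℂ)) ∂(mes N) ∂(mes N) :=
        integral_add_left_eq_self (μ := mes N) (fun w => ∫ x, F w * G x * Complex.exp
          (Complex.I * ((symp (w - u) x - symp (w - u) u : ℝ) : ℂ)) ∂(mes N)) u
    _ = _ := by
        congr 1; funext w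
        congr 1; funext x
        congr 2
        rw [symp_sub_left, symp_sub_left, symp_self]
        push_cast; ring

end TwAux

open TwAux

theorem twProd_twConv_fourier_switch (N : ℕ) (hN : 0 < N)
    (f g : SchwartzMap (PS N) ℂ) (u : PS N) :
    twProd (⇑f) (⇑g) u = twConv (sympF (⇑f)) (⇑g) u ∧
    twProd (⇑f) (⇑g) u = twConv (⇑f) (sympFt (⇑g)) u ∧
    twConv (⇑f) (⇑g) u = twProd (sympF (⇑f)) (⇑g) u ∧
    twConv (⇑f) (⇑g) u = twProd (⇑f) (sympFt (⇑g)) u := by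
  have hf := schwartz_integrable f
  have hg := schwartz_integrable g
  have hker1 : Integrable (Function.uncurry fun w x => f w * g x *
      Complex.exp (Complex.I * ((symp w x - symp u x - symp w u : ℝ) : ℂ)))
      ((mes N).prod (mes N)) := integ_kernel hf hg (hphi u)
  have hker3 : Integrable (Function.uncurry fun w x => sympF (⇑f) w * g x *
      Complex.exp (Complex.I * ((symp w x - symp u x - symp w u : ℝ) : ℂ)))
      ((mes N).prod (mes N)) := integ_kernel (integrable_sympF f) hg (hphi u)
  have h1 : twProd (⇑f) (⇑g) u = twConv (sympF (⇑f)) (⇑g) u := by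
    calc twProd (⇑f) (⇑g) u
        = ∫ w, ∫ x, f w * g x * Complex.exp
            (Complex.I * ((symp w x - symp u x - symp w u : ℝ) : ℂ)) ∂(mes N) ∂(mes N) :=
          prod_canon _ _ u
      _ = ∫ x, ∫ w, f w * g x * Complex.exp
            (Complex.I * ((symp w x - symp u x - symp w u : ℝ) : ℂ)) ∂(mes N) ∂(mes N) :=
          integral_integral_swap hker1
      _ = twConv (sympF (⇑f)) (⇑g) u := by
          simp only [twConv, sympF]
          congr 1; funext t
          rw [mul_assoc, ← integral_mul_const]
          congr 1; funext w
          rw [show Complex.exp (Complex.I * ((symp w t - symp u t - symp w u : ℝ) : ℂ))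
              = Complex.exp (-Complex.I * ((symp w (u - t) : ℝ) : ℂ))
                * Complex.exp (-Complex.I * ((symp u t : ℝ) : ℂ)) from by
            rw [← Complex.exp_add]; congr 1
            rw [symp_sub_right]; push_cast; ring]
          ring
  have h2 : twProd (⇑f) (⇑g) u = twConv (⇑f) (sympFt (⇑g)) u := by
    calc twProd (⇑f) (⇑g) u
        = ∫ w, ∫ x, f w * g x * Complex.exp
            (Complex.I * ((symp w x - symp u x - symp w u : ℝ) : ℂ)) ∂(mes N) ∂(mes N) :=
          prod_canon _ _ u
      _ = ∫ w, (fun w => ∫ x, f w * g x * Complex.exp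
            (Complex.I * ((symp w x - symp u x - symp w u : ℝ) : ℂ)) ∂(mes N)) (u - w) ∂(mes N) :=
          (integral_sub_left_eq_self _ (mes N) u).symm
      _ = twConv (⇑f) (sympFt (⇑g)) u := by
          simp only [twConv, sympFt]
          congr 1; funext t
          show (∫ x, f (u - t) * g x * Complex.exp
              (Complex.I * ((symp (u - t) x - symp u x - symp (u - t) u : ℝ) : ℂ)) ∂(mes N)) = _
          rw [mul_assoc, ← integral_mul_const, ← integral_const_mul]
          congr 1; funext x
          rw [show Complex.exp (Complex.I * ((symp (u - t) x - symp u x - symp (u - t) u : ℝ) : ℂ))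
              = Complex.exp (Complex.I * ((symp x t : ℝ) : ℂ))
                * Complex.exp (-Complex.I * ((symp u t : ℝ) : ℂ)) from by
            rw [← Complex.exp_add]; congr 1
            rw [symp_sub_left, symp_sub_left, symp_self, symp_anti t x, symp_anti t u]
            push_cast; ring]
          ring
  have h3 : twProd (sympF (⇑f)) (⇑g) u = twConv (⇑f) (⇑g) u := by
    calc twProd (sympF (⇑f)) (⇑g) u
        = ∫ w, ∫ x, sympF (⇑f) w * g x * Complex.exp
            (Complex.I * ((symp w x - symp u x - symp w u : ℝ) : ℂ)) ∂(mes N) ∂(mes N) :=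
          prod_canon _ _ u
      _ = ∫ x, ∫ w, sympF (⇑f) w * g x * Complex.exp
            (Complex.I * ((symp w x - symp u x - symp w u : ℝ) : ℂ)) ∂(mes N) ∂(mes N) :=
          integral_integral_swap hker3
      _ = twConv (⇑f) (⇑g) u := by
          simp only [twConv]
          congr 1; funext x
          have hx : (∫ w, sympF (⇑f) w * (⇑g) x * Complex.exp
              (Complex.I * ((symp w x - symp u x - symp w u : ℝ) : ℂ)) ∂(mes N))
              = ((⇑g) x * Complex.exp (-Complex.I * ((symp u x : ℝ) : ℂ)))
                * sympFt (sympF (⇑f)) (x - u) := by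
            simp only [sympFt]
            rw [← integral_const_mul]
            congr 1; funext w
            rw [show Complex.exp (Complex.I * ((symp w x - symp u x - symp w u : ℝ) : ℂ))
                = Complex.exp (-Complex.I * ((symp u x : ℝ) : ℂ))
                  * Complex.exp (Complex.I * ((symp w (x - u) : ℝ) : ℂ)) from by
              rw [← Complex.exp_add]; congr 1
              rw [symp_sub_right]; push_cast; ring]
            ring
          rw [hx, sympFt_sympF f (x - u), neg_sub]
          ring
  have h4 : twProd (⇑f) (sympFt (⇑g)) u = twConv (⇑f) (⇑g) u := by
    calc twProd (⇑f) (sympFt (⇑g)) u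
        = ∫ w, ∫ x, f w * sympFt (⇑g) x * Complex.exp
            (Complex.I * ((symp w x - symp u x - symp w u : ℝ) : ℂ)) ∂(mes N) ∂(mes N) :=
          prod_canon _ _ u
      _ = ∫ w, (⇑f) w * (⇑g) (u - w) * Complex.exp (-Complex.I * ((symp w u : ℝ) : ℂ)) ∂(mes N) := by
          congr 1; funext w
          have hw : (∫ x, (⇑f) w * sympFt (⇑g) x * Complex.exp
              (Complex.I * ((symp w x - symp u x - symp w u : ℝ) : ℂ)) ∂(mes N))
              = ((⇑f) w * Complex.exp (-Complex.I * ((symp w u : ℝ) : ℂ)))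
                * sympF (sympFt (⇑g)) (w - u) := by
            simp only [sympF]
            rw [← integral_const_mul]
            congr 1; funext x
            rw [show Complex.exp (Complex.I * ((symp w x - symp u x - symp w u : ℝ) : ℂ))
                = Complex.exp (-Complex.I * ((symp w u : ℝ) : ℂ))
                  * Complex.exp (-Complex.I * ((symp x (w - u) : ℝ) : ℂ)) from by
              rw [← Complex.exp_add]; congr 1
              rw [symp_sub_right, symp_anti x w, symp_anti x u]; push_cast; ring]
            ring
          rw [hw, sympF_sympFt g (w - u), neg_sub]
          ring
      _ = ∫ w, (fun w => (⇑f) w * (⇑g) (u - w)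
            * Complex.exp (-Complex.I * ((symp w u : ℝ) : ℂ))) (u - w) ∂(mes N) :=
          (integral_sub_left_eq_self _ (mes N) u).symm
      _ = twConv (⇑f) (⇑g) u := by
          simp only [twConv]
          congr 1; funext t
          show (⇑f) (u - t) * (⇑g) (u - (u - t))
              * Complex.exp (-Complex.I * ((symp (u - t) u : ℝ) : ℂ)) = _
          rw [sub_sub_cancel]
          congr 2
          rw [symp_sub_left, symp_self, symp_anti t u]
          push_cast; ring
  exact ⟨h1, h2, h3.symm, h4.symm⟩
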